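/- Let n and s be coprime integers with 2 ≤ n < s, g = (n-1)(s-1)/2, and let w_1 < ... < w_g be the gaps of the numerical semigroup generated by n and s. Then the Schur function S_{λ(n,s)}(T), a priori a polynomial in T_1, T_2, T_3, ..., involves only the variables T_{w_1}, ..., T_{w_g}; i.e. every variable T_m actually occurring in S_{λ(n,s)} has index m equal to one of the gaps w_1, ..., w_g. -/

import Mathlib

open MvPolynomial

/-- A natural number `k` is representable if `k = n*i + s*j` for some naturals `i, j`. -/
def Representable (n s k : ℕ) : Prop := ∃ i j : ℕ, k = n * i + s * j

/-- The polynomials `p_m` defined by `p_0 = 1` and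
`m * p_m = ∑_{i=1}^m i * T_i * p_{m-i}`; the variable `X i` is `T_i`. -/
noncomputable def pElem : ℕ → MvPolynomial ℕ ℚ
  | 0 => 1
  | (m + 1) =>
      (((m : ℚ) + 1)⁻¹) •
        ∑ i ∈ Finset.range (m + 1),
          (((i : ℚ) + 1) • (MvPolynomial.X (i + 1) * pElem (m - i)))
  decreasing_by exact Nat.lt_succ_of_le (Nat.sub_le m i)

/-- `p_k` for integer `k`, with `p_k = 0` for `k < 0`. -/
noncomputable def pZ (k : ℤ) : MvPolynomial ℕ ℚ :=
  if k < 0 then 0 else pElem k.toNat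

/-- The Schur function `S_λ = det (p_{λ_i - i + j})_{1 ≤ i,j ≤ l}`. -/
noncomputable def schur (l : ℕ) (lam : Fin l → ℕ) : MvPolynomial ℕ ℚ :=
  Matrix.det (Matrix.of fun i j : Fin l =>
    pZ ((lam i : ℤ) - ((i : ℕ) : ℤ) + ((j : ℕ) : ℤ)))

/-! ### Auxiliary lemmas -/

lemma pderiv_finset_prod {ι : Type*} [DecidableEq ι] (t : ℕ) (s : Finset ι)
    (f : ι → MvPolynomial ℕ ℚ) :
    pderiv t (∏ i ∈ s, f i) = ∑ i ∈ s, pderiv t (f i) * ∏ j ∈ s.erase i, f j := by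
  induction s using Finset.induction_on with
  | empty => simp
  | @insert a s ha ih =>
    rw [Finset.prod_insert ha, pderiv_mul, ih, Finset.sum_insert ha,
      Finset.erase_insert ha, Finset.mul_sum]
    congr 1
    apply Finset.sum_congr rfl
    intro i hi
    rw [Finset.erase_insert_of_ne (by rintro rfl; exact ha hi), Finset.prod_insert
      (fun h => ha (Finset.erase_subset _ _ h))]
    ring

lemma pderiv_det {l : ℕ} (t : ℕ) (A : Matrix (Fin l) (Fin l) (MvPolynomial ℕ ℚ)) :
    pderiv t A.det = ∑ r : Fin l, (A.updateRow r (fun j => pderiv t (A r j))).det := by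
  simp only [Matrix.det_apply]
  rw [map_sum, Finset.sum_comm]
  apply Finset.sum_congr rfl
  intro σ _
  have hz : ∀ x : MvPolynomial ℕ ℚ, pderiv t ((Equiv.Perm.sign σ) • x)
      = (Equiv.Perm.sign σ) • pderiv t x := by
    intro x
    rcases Int.units_eq_one_or (Equiv.Perm.sign σ) with h | h <;> simp [h]
  rw [hz, pderiv_finset_prod]
  rw [← Finset.smul_sum]
  congr 1
  rw [← Equiv.sum_comp σ (fun r => ∏ i, (A.updateRow r fun j => (pderiv t) (A r j)) (σ i) i)]
  apply Finset.sum_congr rfl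
  intro i _
  rw [← Finset.mul_prod_erase Finset.univ _ (Finset.mem_univ i)]
  congr 1
  · rw [Matrix.updateRow_self]
  · apply Finset.prod_congr rfl
    intro j hj
    rw [Matrix.updateRow_ne]
    exact fun h => (Finset.mem_erase.1 hj).1 (σ.injective h)

lemma pElem_rec (K : ℕ) : ∑ i ∈ Finset.range (K+1), ((i:ℚ)+1) • (X (i+1) * pElem (K - i))
    = ((K:ℚ)+1) • pElem (K+1) := by
  rw [pElem, smul_smul, mul_inv_cancel₀ (by positivity), one_smul]

lemma pderiv_pElem : ∀ (N : ℕ) (m : ℕ),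
    pderiv m (pElem N) = if 1 ≤ m ∧ m ≤ N then pElem (N - m) else 0 := by
  intro N
  induction N using Nat.strong_induction_on with
  | _ N ih =>
    match N with
    | 0 =>
      intro m
      rw [if_neg (by omega), pElem]
      exact pderiv_C
    | M + 1 =>
      intro m
      rw [pElem, Derivation.map_smul, map_sum]
      have hterm : ∀ i ∈ Finset.range (M+1),
          pderiv m (((i:ℚ)+1) • (X (i+1) * pElem (M - i)))
          = ((i:ℚ)+1) • ((if (i+1 : ℕ) = m then (1 : MvPolynomial ℕ ℚ) else 0) * pElem (M-i))
            + ((i:ℚ)+1) • (X (i+1) * (if 1 ≤ m ∧ m ≤ M-i then pElem (M-i-m) else 0)) := by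
        intro i hi
        rw [Derivation.map_smul, pderiv_mul, ih (M-i) (by omega) m, smul_add]
        congr 3
        by_cases h : (i+1 : ℕ) = m
        · rw [if_pos h, h, pderiv_X_self]
        · rw [if_neg h, pderiv_X_of_ne h]
      rw [Finset.sum_congr rfl hterm, Finset.sum_add_distrib]
      set S1 := ∑ i ∈ Finset.range (M+1),
        ((i:ℚ)+1) • ((if (i+1 : ℕ) = m then (1 : MvPolynomial ℕ ℚ) else 0) * pElem (M-i)) with hS1
      set S2 := ∑ i ∈ Finset.range (M+1),
        ((i:ℚ)+1) • (X (i+1) * (if 1 ≤ m ∧ m ≤ M-i then pElem (M-i-m) else 0)) with hS2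
      by_cases hm0 : m = 0
      · subst hm0
        rw [if_neg (by omega)]
        have h1 : S1 = 0 := Finset.sum_eq_zero fun i _ => by simp
        have h2 : S2 = 0 := Finset.sum_eq_zero fun i _ => by
          rw [if_neg (by omega)]; simp
        rw [h1, h2]; simp
      · have hm1 : 1 ≤ m := by omega
        by_cases hmM : m ≤ M + 1
        · have h1 : S1 = (m:ℚ) • pElem (M + 1 - m) := by
            rw [hS1, Finset.sum_eq_single (m-1)]
            · rw [if_pos (by omega)]
              have : ((m-1 : ℕ):ℚ) + 1 = (m:ℚ) := by
                have : ((m-1 : ℕ):ℚ) = (m:ℚ) - 1 := by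
                  rw [Nat.cast_sub hm1]; norm_num
                rw [this]; ring
              rw [this, one_mul]
              congr 2
              omega
            · intro i _ hne
              rw [if_neg (by omega)]; simp
            · intro h
              exact absurd (Finset.mem_range.2 (by omega)) h
          by_cases hmM' : m ≤ M
          · have h2 : S2 = (((M - m : ℕ):ℚ)+1) • pElem (M - m + 1) := by
              rw [hS2, ← pElem_rec (M - m)]
              rw [← Finset.sum_subset (Finset.range_subset_range.2 (by omega : M - m + 1 ≤ M + 1))]
              · apply Finset.sum_congr rfl
                intro i hi
                rw [if_pos ⟨hm1, by simp at hi; omega⟩]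
                have : M - i - m = M - m - i := by omega
                rw [this]
              · intro i _ hi2
                rw [if_neg (by simp at hi2 ⊢; omega)]
                simp
            rw [h1, h2, if_pos ⟨hm1, hmM⟩]
            have he : M - m + 1 = M + 1 - m := by omega
            rw [he, ← add_smul, smul_smul]
            have : ((M:ℚ) + 1)⁻¹ * ((m:ℚ) + (((M - m : ℕ):ℚ) + 1)) = 1 := by
              rw [Nat.cast_sub hmM']
              rw [show (m:ℚ) + ((M:ℚ) - (m:ℚ) + 1) = (M:ℚ)+1 by ring]
              exact inv_mul_cancel₀ (by positivity)
            rw [this, one_smul]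
          · have hm : m = M + 1 := by omega
            have h2 : S2 = 0 := Finset.sum_eq_zero fun i hi => by
              rw [if_neg (by simp at hi; omega)]; simp
            rw [h1, h2, add_zero, if_pos ⟨hm1, hmM⟩, smul_smul]
            have : ((M:ℚ) + 1)⁻¹ * (m:ℚ) = 1 := by
              rw [hm]; push_cast
              exact inv_mul_cancel₀ (by positivity)
            rw [this, one_smul]
        · have h1 : S1 = 0 := Finset.sum_eq_zero fun i hi => by
            rw [if_neg (by simp at hi; omega)]; simp
          have h2 : S2 = 0 := Finset.sum_eq_zero fun i hi => by
            rw [if_neg (by omega)]; simp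
          rw [h1, h2, if_neg (by omega)]; simp

lemma pderiv_pZ (m : ℕ) (hm : 1 ≤ m) (k : ℤ) : pderiv m (pZ k) = pZ (k - m) := by
  unfold pZ
  by_cases hk : k < 0
  · rw [if_pos hk, if_pos (by omega), map_zero]
  · rw [if_neg hk, pderiv_pElem]
    by_cases hmk : (m : ℤ) ≤ k
    · rw [if_pos ⟨hm, by omega⟩, if_neg (by omega)]
      congr 1
      omega
    · rw [if_neg (by omega), if_pos (by omega)]

lemma pderiv_pZ_zero (k : ℤ) : pderiv 0 (pZ k) = 0 := by
  unfold pZ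
  by_cases hk : k < 0
  · rw [if_pos hk, map_zero]
  · rw [if_neg hk, pderiv_pElem, if_neg (by omega)]

lemma pderiv_ne_zero_of_mem_vars {p : MvPolynomial ℕ ℚ} {m : ℕ} (h : m ∈ p.vars) :
    pderiv m p ≠ 0 := by
  rw [mem_vars] at h
  obtain ⟨d, hd, hmd⟩ := h
  have hdm : d m ≠ 0 := Finsupp.mem_support_iff.1 hmd
  have hcd : coeff d p ≠ 0 := mem_support_iff.1 hd
  intro h0
  have key : coeff (d - Finsupp.single m 1) (pderiv m p) = coeff d p * (d m : ℚ) := by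
    conv_lhs => rw [p.as_sum, map_sum]
    rw [coeff_sum, Finset.sum_eq_single_of_mem d hd]
    · rw [pderiv_monomial, coeff_monomial, if_pos rfl]
    · intro v hv hvd
      rw [pderiv_monomial, coeff_monomial]
      split_ifs with hEq
      · by_cases hv0 : v m = 0
        · simp [hv0]
        · exfalso
          apply hvd
          have h1 : Finsupp.single m 1 ≤ v := Finsupp.single_le_iff.2 (by omega)
          have h2 : Finsupp.single m 1 ≤ d := Finsupp.single_le_iff.2 (by omega)
          calc v = v - Finsupp.single m 1 + Finsupp.single m 1 := (tsub_add_cancel_of_le h1).symm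
            _ = d - Finsupp.single m 1 + Finsupp.single m 1 := by rw [hEq]
            _ = d := tsub_add_cancel_of_le h2
      · rfl
  rw [h0, coeff_zero] at key
  exact mul_ne_zero hcd (Nat.cast_ne_zero.2 hdm) key.symm

lemma representable_add {n s a b : ℕ} (ha : Representable n s a) (hb : Representable n s b) :
    Representable n s (a + b) := by
  obtain ⟨i1, j1, h1⟩ := ha
  obtain ⟨i2, j2, h2⟩ := hb
  exact ⟨i1 + i2, j1 + j2, by subst h1 h2; ring⟩

theorem schur_lambda_ns_vars_are_gaps (n s g : ℕ) (hn : 2 ≤ n) (hns : n < s)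
    (hcop : Nat.Coprime n s) (hg : 2 * g = (n - 1) * (s - 1))
    (w : Fin g → ℕ) (hw : StrictMono w)
    (hwr : Set.range w = {k : ℕ | ¬ Representable n s k}) :
    ∀ m : ℕ,
      m ∈ (schur g (fun i : Fin g => w i.rev - (g - 1 - (i : ℕ)))).vars →
      ∃ i : Fin g, w i = m := by
  intro m hm
  by_cases hrep : Representable n s m
  swap
  · have : m ∈ Set.range w := by rw [hwr]; exact hrep
    obtain ⟨i, hi⟩ := this
    exact ⟨i, hi⟩
  · exfalso
    -- every w k is not representable
    have hgap : ∀ k : Fin g, ¬ Representable n s (w k) := by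
      intro k
      have : w k ∈ Set.range w := ⟨k, rfl⟩
      rw [hwr] at this
      exact this
    -- w k ≥ k
    have hle : ∀ k : Fin g, (k : ℕ) ≤ w k := by
      have haux : ∀ t, ∀ h : t < g, t ≤ w ⟨t, h⟩ := by
        intro t
        induction t with
        | zero => intro h; exact Nat.zero_le _
        | succ u ihu =>
          intro h
          have h' : u < g := Nat.lt_of_succ_lt h
          have h1 := ihu h'
          have h2 : w ⟨u, h'⟩ < w ⟨u+1, h⟩ := hw (by simp [Fin.lt_def])
          omega
      intro k
      simpa using haux k k.2
    apply pderiv_ne_zero_of_mem_vars hm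
    rw [schur, pderiv_det]
    apply Finset.sum_eq_zero
    intro r _
    set lam : Fin g → ℕ := fun i : Fin g => w i.rev - (g - 1 - (i : ℕ)) with hlam
    set A : Matrix (Fin g) (Fin g) (MvPolynomial ℕ ℚ) := Matrix.of fun i j : Fin g =>
      pZ ((lam i : ℤ) - ((i : ℕ) : ℤ) + ((j : ℕ) : ℤ)) with hA
    -- the integer identity for entries
    have hcast : ∀ (i j : Fin g), ((lam i : ℕ) : ℤ) - ((i : ℕ) : ℤ) + ((j : ℕ) : ℤ)
        = ((w i.rev : ℕ) : ℤ) - ((g : ℤ) - 1) + ((j : ℕ) : ℤ) := by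
      intro i j
      have h1 : (i.rev : ℕ) = g - 1 - (i : ℕ) := by
        rw [Fin.val_rev]; omega
      have h2 : g - 1 - (i : ℕ) ≤ w i.rev := h1 ▸ hle i.rev
      have h3 : (i : ℕ) < g := i.2
      simp only [hlam]
      omega
    rcases Nat.eq_zero_or_pos m with hm0 | hm1
    · subst hm0
      apply Matrix.det_eq_zero_of_row_eq_zero r
      intro j
      rw [Matrix.updateRow_self]
      exact pderiv_pZ_zero _
    · by_cases hbm : (w r.rev : ℤ) - m < 0
      · -- the updated row is identically zero
        apply Matrix.det_eq_zero_of_row_eq_zero r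
        intro j
        rw [Matrix.updateRow_self, hA, Matrix.of_apply, pderiv_pZ m hm1, hcast r j,
          pZ, if_pos (by have := j.2; omega)]
      · -- w r.rev - m is a gap, giving a repeated row
        push_neg at hbm
        have hwm : m ≤ w r.rev := by omega
        have hnr : ¬ Representable n s (w r.rev - m) := by
          intro hx
          apply hgap r.rev
          have : w r.rev = (w r.rev - m) + m := by omega
          rw [this]
          exact representable_add hx hrep
        have : (w r.rev - m : ℕ) ∈ Set.range w := by rw [hwr]; exact hnr
        obtain ⟨k, hk⟩ := this
        have hkne : k.rev ≠ r := by
          intro hEq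
          have : k = r.rev := by rw [← hEq, Fin.rev_rev]
          rw [this] at hk
          omega
        apply Matrix.det_zero_of_row_eq (Ne.symm hkne)
        funext j
        rw [Matrix.updateRow_self, Matrix.updateRow_ne hkne, hA, Matrix.of_apply,
          Matrix.of_apply, pderiv_pZ m hm1, hcast r j, hcast k.rev j, Fin.rev_rev, hk]
        congr 1
        omega
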